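/- Randomisation of s-finite kernels: if σ is an s-finite kernel from a measurable space S to a standard Borel space T, then there exists a measurable partial function g : S × [0,∞) ⇀ T such that σ(s) = g(s,·)_*(λ|_{[0,∞)}) for all s ∈ S, where λ is Lebesgue measure. Conversely, every kernel arising as such a pushforward of Lebesgue measure on [0,∞) along a measurable partial function is s-finite. -/

import Mathlib

open MeasureTheory ProbabilityTheory Set Filter
open scoped ENNReal
section Aux
variable {S : Type*} [MeasurableSpace S]

lemma aux_markov_real (κ : Kernel S ℝ) [IsMarkovKernel κ] :
    ∃ q : S × ℝ → ℝ, Measurable q ∧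
      ∀ s, Measure.map (fun p => q (s, p)) (volume.restrict (Ioo (0:ℝ) 1)) = κ s := by
  classical
  set H : S × ℝ → EReal := fun x =>
    ⨅ t : ℚ, if ENNReal.ofReal x.2 ≤ κ x.1 (Iic (t:ℝ)) then ((t:ℝ) : EReal) else ⊤ with hHdef
  have hH : Measurable H := by
    refine Measurable.iInf fun t => Measurable.ite ?_ measurable_const measurable_const
    exact measurableSet_le (ENNReal.measurable_ofReal.comp measurable_snd)
      ((κ.measurable_coe measurableSet_Iic).comp measurable_fst)
  refine ⟨fun x => (H x).toReal, hH.ereal_toReal, fun s => ?_⟩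
  -- facts about F
  set F : ℝ → ℝ≥0∞ := fun x => κ s (Iic x) with hFdef
  have hFmono : Monotone F := fun x y hxy => measure_mono (Iic_subset_Iic.2 hxy)
  have hFtop : Tendsto F atTop (nhds 1) := by
    have := tendsto_measure_Iic_atTop (κ s)
    rwa [measure_univ] at this
  have hFbot : Tendsto (fun n : ℕ => F (-(n:ℝ))) atTop (nhds 0) := by
    have h0 : (⋂ n : ℕ, Iic (-(n:ℝ))) = ∅ := by
      ext y
      simp only [mem_iInter, mem_Iic, mem_empty_iff_false, iff_false, not_forall, not_le]
      obtain ⟨n, hn⟩ := exists_nat_gt (-y)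
      exact ⟨n, by linarith⟩
    have := tendsto_measure_iInter_atTop (μ := κ s)
      (fun n => nullMeasurableSet_Iic)
      (fun i j hij => Iic_subset_Iic.2 (neg_le_neg (Nat.cast_le.2 hij)))
      ⟨0, measure_ne_top _ _⟩
    rwa [h0, measure_empty] at this
  -- right continuity
  have hrc : ∀ (c : ℝ≥0∞) (x : ℝ), (∀ ε : ℝ, 0 < ε → c ≤ F (x + ε)) → c ≤ F x := by
    intro c x h
    have hiInter : (⋂ n : ℕ, Iic (x + 1/(n+1))) = Iic x := by
      ext y
      simp only [mem_iInter, mem_Iic]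
      constructor
      · intro hy
        by_contra hxy
        push_neg at hxy
        obtain ⟨n, hn⟩ := exists_nat_one_div_lt (sub_pos.2 hxy)
        linarith [hy n]
      · intro hy n
        have : (0:ℝ) < 1/(n+1) := by positivity
        linarith
    have htd : Tendsto (fun n : ℕ => F (x + 1/(n+1))) atTop (nhds (F x)) := by
      have := tendsto_measure_iInter_atTop (μ := κ s) (s := fun n : ℕ => Iic (x + 1/(n+1)))
        (fun n => nullMeasurableSet_Iic)
        (fun i j hij => Iic_subset_Iic.2 (by
          have : (j:ℝ) + 1 ≥ (i:ℝ) + 1 := by exact_mod_cast by simp [hij]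
          have h1 : (0:ℝ) < (i:ℝ)+1 := by positivity
          have h2 : (0:ℝ) < (j:ℝ)+1 := by positivity
          have := one_div_le_one_div_of_le h1 this
          linarith))
        ⟨0, measure_ne_top _ _⟩
      rwa [hiInter] at this
    exact ge_of_tendsto' htd fun n => h _ (by positivity)
  -- key characterisation
  have key : ∀ p : ℝ, p ∈ Ioo (0:ℝ) 1 → ∀ x : ℝ,
      ((H (s, p)).toReal ≤ x ↔ ENNReal.ofReal p ≤ F x) := by
    intro p hp x
    set c : ℝ≥0∞ := ENNReal.ofReal p with hcdef
    have hc0 : 0 < c := ENNReal.ofReal_pos.2 hp.1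
    have hc1 : c < 1 := ENNReal.ofReal_lt_one.2 hp.2
    -- upper bound rational
    obtain ⟨x₁, hx₁⟩ : ∃ x₁ : ℝ, c ≤ F x₁ := by
      obtain ⟨x₁, hx₁⟩ := (hFtop.eventually (eventually_ge_nhds hc1)).exists
      exact ⟨x₁, hx₁⟩
    obtain ⟨t₁, ht₁⟩ := exists_rat_gt x₁
    have ht₁A : c ≤ F (t₁ : ℝ) := le_trans hx₁ (hFmono ht₁.le)
    -- lower bound
    obtain ⟨n₀, hn₀⟩ : ∃ n : ℕ, F (-(n:ℝ)) < c :=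
      (hFbot.eventually (eventually_lt_nhds hc0)).exists
    set x₀ : ℝ := -(n₀:ℝ) with hx₀def
    have hlow : ∀ t : ℚ, c ≤ F (t:ℝ) → x₀ ≤ (t:ℝ) := by
      intro t ht
      by_contra hlt
      push_neg at hlt
      exact absurd (le_trans ht (hFmono hlt.le)) (not_le.2 hn₀)
    have hHlow : ((x₀ : ℝ) : EReal) ≤ H (s, p) := by
      refine le_iInf fun t => ?_
      by_cases ht : c ≤ F (t:ℝ)
      · simp only [hHdef]
        rw [if_pos ht]
        exact_mod_cast hlow t ht
      · simp only [hHdef]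
        rw [if_neg ht]
        exact le_top
    have hHupp : H (s, p) ≤ ((t₁ : ℝ) : EReal) := by
      refine iInf_le_of_le t₁ ?_
      simp only [hHdef]
      rw [if_pos ht₁A]
    have hne_bot : H (s, p) ≠ ⊥ := fun h => by
      rw [h] at hHlow
      exact (EReal.coe_ne_bot x₀) (le_bot_iff.1 hHlow)
    have hne_top : H (s, p) ≠ ⊤ := fun h => by
      rw [h] at hHupp
      exact (EReal.coe_ne_top (t₁:ℝ)) (top_le_iff.1 hHupp)
    have hHco : H (s, p) = (((H (s,p)).toReal : ℝ) : EReal) := (EReal.coe_toReal hne_top hne_bot).symm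
    constructor
    · intro h
      refine hrc c x fun ε hε => ?_
      have hlt : H (s, p) < ((x + ε : ℝ) : EReal) := by
        rw [hHco]
        exact_mod_cast lt_of_le_of_lt h (by linarith)
      obtain ⟨t, ht⟩ := iInf_lt_iff.1 hlt
      by_cases htc : c ≤ F (t:ℝ)
      · rw [if_pos htc] at ht
        have : (t:ℝ) < x + ε := by exact_mod_cast ht
        exact le_trans htc (hFmono this.le)
      · rw [if_neg htc] at ht
        exact absurd ht (not_lt.2 le_top)
    · intro h
      by_contra hcon
      push_neg at hcon
      obtain ⟨t, htx, htH⟩ := exists_rat_btwn hcon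
      have : H (s, p) ≤ ((t : ℝ) : EReal) := by
        refine iInf_le_of_le t ?_
        simp only [hHdef]
        rw [if_pos (le_trans h (hFmono htx.le))]
      rw [hHco] at this
      exact absurd (by exact_mod_cast this) (not_le.2 htH)
  -- the pushforward computation
  have hqs : Measurable fun p => (H (s, p)).toReal :=
    (hH.comp measurable_prodMk_left).ereal_toReal
  haveI : IsProbabilityMeasure (volume.restrict (Ioo (0:ℝ) 1)) := by
    constructor
    rw [Measure.restrict_apply_univ, Real.volume_Ioo]
    norm_num
  haveI : IsProbabilityMeasure
      (Measure.map (fun p => (H (s, p)).toReal) (volume.restrict (Ioo (0:ℝ) 1))) :=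
    Measure.isProbabilityMeasure_map hqs.aemeasurable
  refine Measure.ext_of_Iic _ _ fun x => ?_
  rw [Measure.map_apply hqs measurableSet_Iic, Measure.restrict_apply' measurableSet_Ioo]
  have hset : (fun p => (H (s, p)).toReal) ⁻¹' Iic x ∩ Ioo 0 1
      = Iic (F x).toReal ∩ Ioo 0 1 := by
    ext p
    simp only [mem_inter_iff, mem_preimage, mem_Iic, and_congr_left_iff]
    intro hp
    rw [key p hp x, ENNReal.ofReal_le_iff_le_toReal (measure_ne_top _ _)]
  rw [hset]
  have hm0 : (0:ℝ) ≤ (F x).toReal := ENNReal.toReal_nonneg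
  have hm1 : (F x).toReal ≤ 1 := by
    have : F x ≤ 1 := prob_le_one
    simpa using ENNReal.toReal_mono (by norm_num) this
  have : volume (Iic (F x).toReal ∩ Ioo 0 1) = ENNReal.ofReal (F x).toReal := by
    rcases eq_or_lt_of_le hm1 with h1 | h1
    · rw [show Iic (F x).toReal ∩ Ioo 0 1 = Ioo 0 1 by
        rw [inter_eq_right]
        intro y hy
        simp only [mem_Iic]
        rw [h1]; exact hy.2.le]
      rw [Real.volume_Ioo, h1]
      norm_num
    · rw [show Iic (F x).toReal ∩ Ioo 0 1 = Ioc 0 (F x).toReal by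
        ext y
        simp only [mem_inter_iff, mem_Iic, mem_Ioo, mem_Ioc]
        constructor
        · rintro ⟨h, h2, _⟩; exact ⟨h2, h⟩
        · rintro ⟨h2, h⟩; exact ⟨h, h2, lt_of_le_of_lt h h1⟩]
      rw [Real.volume_Ioc]
      norm_num
  rw [this, ENNReal.ofReal_toReal (measure_ne_top _ _)]

end Aux
section Aux2
variable {S T : Type*} [MeasurableSpace S] [MeasurableSpace T] [StandardBorelSpace T]

lemma aux_embedding : ∃ e : T ⊕ Unit → ℝ, MeasurableEmbedding e := by
  classical
  obtain ⟨e, he⟩ := exists_measurableEmbedding_real T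
  have hexp : MeasurableEmbedding Real.exp :=
    Real.continuous_exp.measurableEmbedding Real.exp_injective
  set e₂ : T → ℝ := fun t => Real.exp (e t) with he₂def
  have he₂ : MeasurableEmbedding e₂ := hexp.comp he
  refine ⟨Sum.elim e₂ (fun _ => (0:ℝ)), ?_, ?_, ?_⟩
  · rintro (a | a) (b | b) h
    · simp only [Sum.elim_inl] at h
      rw [he₂.injective h]
    · exact absurd h.symm (ne_of_gt (by simpa [he₂def] using Real.exp_pos (e a))).symm
    · exact absurd h (ne_of_gt (by simpa [he₂def] using Real.exp_pos (e b))).symm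
    · simp
  · exact he₂.measurable.sumElim measurable_const
  · intro A hA
    have : Sum.elim e₂ (fun _ => (0:ℝ)) '' A
        = e₂ '' (Sum.inl ⁻¹' A) ∪ (if Sum.inr () ∈ A then {(0:ℝ)} else ∅) := by
      ext y
      simp only [mem_image, mem_union, mem_preimage]
      constructor
      · rintro ⟨(a | a), ha, rfl⟩
        · exact Or.inl ⟨a, ha, rfl⟩
        · right; simp [ha]
      · rintro (⟨a, ha, rfl⟩ | hy)
        · exact ⟨Sum.inl a, ha, rfl⟩
        · split_ifs at hy with h
          · exact ⟨Sum.inr (), by simpa using ⟨h, hy.symm⟩⟩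
          · exact absurd hy (notMem_empty y)
    rw [this]
    refine (he₂.measurableSet_image' (measurable_inl hA)).union ?_
    split_ifs <;> simp
end Aux2
section Aux3
variable {S T : Type*} [MeasurableSpace S] [MeasurableSpace T] [StandardBorelSpace T]

lemma aux_markov_sum (κ : Kernel S (T ⊕ Unit)) [IsMarkovKernel κ] :
    ∃ f : S × ℝ → T ⊕ Unit, Measurable f ∧
      ∀ s, Measure.map (fun p => f (s, p)) (volume.restrict (Ioo (0:ℝ) 1)) = κ s := by
  obtain ⟨e, he⟩ := aux_embedding (T := T)
  set r : ℝ → T ⊕ Unit := Function.extend e id (fun _ => Sum.inr ()) with hrdef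
  have hr : Measurable r := he.measurable_extend measurable_id measurable_const
  have hre : ∀ a, r (e a) = a := fun a => he.injective.extend_apply _ _ a
  have hκ' : IsMarkovKernel (κ.map e) := Kernel.IsMarkovKernel.map κ he.measurable
  obtain ⟨q, hq, hqs⟩ := aux_markov_real (κ.map e)
  refine ⟨fun x => r (q x), hr.comp hq, fun s => ?_⟩
  have hqm : Measurable fun p => q (s, p) := hq.comp measurable_prodMk_left
  calc Measure.map (fun p => r (q (s, p))) (volume.restrict (Ioo (0:ℝ) 1))
      = Measure.map r (Measure.map (fun p => q (s, p)) (volume.restrict (Ioo (0:ℝ) 1))) :=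
        (Measure.map_map hr hqm).symm
    _ = Measure.map r ((κ.map e) s) := by rw [hqs s]
    _ = Measure.map r (Measure.map e (κ s)) := by rw [Kernel.map_apply κ he.measurable]
    _ = Measure.map (r ∘ e) (κ s) := Measure.map_map hr he.measurable
    _ = κ s := by
        have : r ∘ e = id := funext hre
        rw [this, Measure.map_id]

lemma aux_subprob (κ : Kernel S T) (hκ : ∀ s, κ s Set.univ ≤ 1) :
    ∃ f : S × ℝ → T ⊕ Unit, Measurable f ∧
      ∀ s, ∀ V, MeasurableSet V →
        κ s V = (volume.restrict (Ioo (0:ℝ) 1)) {p : ℝ | f (s, p) ∈ Sum.inl '' V} := by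
  have hmc : Measurable (Function.uncurry fun (s : S) (_ : T ⊕ Unit) => 1 - κ s Set.univ) :=
    (measurable_const.sub ((κ.measurable_coe MeasurableSet.univ))).comp measurable_fst
  set η : Kernel S (T ⊕ Unit) :=
    κ.map Sum.inl +
      Kernel.withDensity
        (Kernel.deterministic (fun _ : S => (Sum.inr () : T ⊕ Unit)) measurable_const)
        (fun s _ => 1 - κ s Set.univ) with hηdef
  have hηapp : ∀ s, η s = Measure.map Sum.inl (κ s)
      + (1 - κ s Set.univ) • Measure.dirac (Sum.inr () : T ⊕ Unit) := by
    intro s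
    rw [hηdef, Kernel.add_apply, Kernel.map_apply κ measurable_inl,
      Kernel.withDensity_apply _ hmc, Kernel.deterministic_apply, withDensity_const]
  haveI : IsMarkovKernel η := by
    constructor
    intro s
    constructor
    rw [hηapp s]
    simp only [Measure.add_apply, Measure.smul_apply, smul_eq_mul]
    rw [Measure.map_apply measurable_inl MeasurableSet.univ]
    simp only [Set.preimage_univ, measure_univ, mul_one]
    exact add_tsub_cancel_of_le (hκ s)
  obtain ⟨f, hf, hfs⟩ := aux_markov_sum η
  refine ⟨f, hf, fun s V hV => ?_⟩
  have hW : MeasurableSet (Sum.inl '' V : Set (T ⊕ Unit)) := hV.inl_image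
  have hfm : Measurable fun p => f (s, p) := hf.comp measurable_prodMk_left
  have : (volume.restrict (Ioo (0:ℝ) 1)) {p : ℝ | f (s, p) ∈ Sum.inl '' V}
      = η s (Sum.inl '' V) := by
    rw [← hfs s, Measure.map_apply hfm hW]
    rfl
  rw [this, hηapp s]
  simp only [Measure.add_apply, Measure.smul_apply, smul_eq_mul]
  rw [Measure.map_apply measurable_inl hW, Set.preimage_image_eq V Sum.inl_injective,
    Measure.dirac_apply' _ hW]
  have hnm : (Sum.inr () : T ⊕ Unit) ∉ Sum.inl '' V := by
    rintro ⟨a, _, h⟩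
    exact Sum.inl_ne_inr h
  rw [Set.indicator_of_notMem hnm]
  simp
end Aux3
section Main
variable {S T : Type*} [MeasurableSpace S] [MeasurableSpace T] [StandardBorelSpace T]

lemma aux_forward (σ : Kernel S T) [IsSFiniteKernel σ] :
    ∃ g : S × ℝ → T ⊕ Unit, Measurable g ∧
      ∀ s, ∀ V, MeasurableSet V →
        σ s V = (volume.restrict (Set.Ici (0:ℝ))) {r : ℝ | g (s, r) ∈ Sum.inl '' V} := by
  classical
  set κ : ℕ → Kernel S T := Kernel.seq σ with hκdef
  set c : ℕ → ℝ := fun n => (Kernel.bound (κ n)).toReal + 1 with hcdef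
  have hc1 : ∀ n, 1 ≤ c n := fun n => le_add_of_nonneg_left ENNReal.toReal_nonneg
  have hc0 : ∀ n, 0 < c n := fun n => lt_of_lt_of_le one_pos (hc1 n)
  have hcne0 : ∀ n, ENNReal.ofReal (c n) ≠ 0 := fun n => (ENNReal.ofReal_pos.2 (hc0 n)).ne'
  set τ : ℕ → Kernel S T := fun n =>
    Kernel.withDensity (κ n) (fun _ _ => (ENNReal.ofReal (c n))⁻¹) with hτdef
  have hτapp : ∀ n s, τ n s = (ENNReal.ofReal (c n))⁻¹ • κ n s := fun n s => by
    rw [hτdef]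
    rw [Kernel.withDensity_apply _ measurable_const, withDensity_const]
  have hτsub : ∀ n s, τ n s Set.univ ≤ 1 := by
    intro n s
    rw [hτapp n s, Measure.smul_apply, smul_eq_mul]
    calc (ENNReal.ofReal (c n))⁻¹ * κ n s Set.univ
        ≤ (ENNReal.ofReal (c n))⁻¹ * ENNReal.ofReal (c n) := by
          gcongr
          calc κ n s Set.univ ≤ Kernel.bound (κ n) := Kernel.measure_le_bound _ _ _
            _ = ENNReal.ofReal (Kernel.bound (κ n)).toReal :=
                (ENNReal.ofReal_toReal (Kernel.bound_ne_top _)).symm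
            _ ≤ ENNReal.ofReal (c n) := ENNReal.ofReal_le_ofReal
                (by show _ ≤ (Kernel.bound (κ n)).toReal + 1; linarith)
      _ = 1 := ENNReal.inv_mul_cancel (hcne0 n) ENNReal.ofReal_ne_top
  choose f hf hfs using fun n => aux_subprob (τ n) (hτsub n)
  -- the intervals
  set a : ℕ → ℝ := fun n => ∑ k ∈ Finset.range n, c k with hadef
  have ha0 : a 0 = 0 := by simp [hadef]
  have hasucc : ∀ n, a (n+1) = a n + c n := fun n => Finset.sum_range_succ _ n
  have hamono : Monotone a := monotone_nat_of_le_succ fun n => by rw [hasucc]; linarith [hc0 n]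
  have hage : ∀ n : ℕ, (n:ℝ) ≤ a n := by
    intro n
    calc (n:ℝ) = ∑ k ∈ Finset.range n, (1:ℝ) := by simp
      _ ≤ a n := Finset.sum_le_sum fun k _ => hc1 k
  have ha0le : ∀ n, 0 ≤ a n := fun n => le_trans (Nat.cast_nonneg n) (hage n)
  have hex : ∀ r : ℝ, ∃ n, r < a (n+1) := by
    intro r
    obtain ⟨n, hn⟩ := exists_nat_gt r
    exact ⟨n, lt_of_lt_of_le hn (le_trans (hage n) (hamono (Nat.le_succ n)))⟩
  set N : ℝ → ℕ := fun r => Nat.find (hex r) with hNdef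
  have hNfind : ∀ r, N r = Nat.find (hex r) := fun r => rfl
  have hNmeas : Measurable N := measurable_find hex fun k => measurableSet_Iio
  have hNspec : ∀ r n, a n ≤ r → r < a (n+1) → N r = n := by
    intro r n h1 h2
    rw [hNfind r]
    refine (Nat.find_eq_iff (hex r)).2 ⟨h2, fun m hm => not_lt.2 ?_⟩
    exact le_trans (hamono (Nat.succ_le_of_lt hm)) h1
  set φ : ℕ → ℝ → ℝ := fun n r => (r - a n) / c n with hφdef
  set g : S × ℝ → T ⊕ Unit := fun x =>
    if 0 ≤ x.2 then f (N x.2) (x.1, φ (N x.2) x.2) else Sum.inr () with hgdef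
  have hφm : Measurable fun r => φ (N r) r := by
    have h1 : Measurable fun r : ℝ => a (N r) := (Measurable.of_discrete (f := a)).comp hNmeas
    have h2 : Measurable fun r : ℝ => c (N r) := (Measurable.of_discrete (f := c)).comp hNmeas
    exact (measurable_id.sub h1).div h2
  have hg : Measurable g := by
    refine Measurable.ite (measurable_snd measurableSet_Ici) ?_ measurable_const
    have hF : Measurable fun y : (S × ℝ) × ℕ => f y.2 y.1 :=
      measurable_from_prod_countable_left fun n => hf n
    have hmap : Measurable fun x : S × ℝ => (((x.1, φ (N x.2) x.2), N x.2) : (S × ℝ) × ℕ) :=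
      (measurable_fst.prodMk (hφm.comp measurable_snd)).prodMk (hNmeas.comp measurable_snd)
    exact hF.comp hmap
  refine ⟨g, hg, fun s V hV => ?_⟩
  set W : Set (T ⊕ Unit) := Sum.inl '' V with hWdef
  have hW : MeasurableSet W := hV.inl_image
  have hE : MeasurableSet {r : ℝ | g (s, r) ∈ W} := (hg.comp measurable_prodMk_left) hW
  have hIci : Set.Ici (0:ℝ) = ⋃ n, Set.Ico (a n) (a (n+1)) := by
    ext r
    simp only [Set.mem_Ici, Set.mem_iUnion, Set.mem_Ico]
    constructor
    · intro hr
      refine ⟨N r, ?_, by rw [hNfind r]; exact Nat.find_spec (hex r)⟩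
      rcases Nat.eq_zero_or_pos (N r) with h | h
      · rw [h, ha0]; exact hr
      · have hlt : N r - 1 < Nat.find (hex r) := by
          rw [← hNfind r]; exact Nat.sub_lt h one_pos
        have hmin := Nat.find_min (hex r) hlt
        rw [Nat.sub_add_cancel h] at hmin
        exact not_lt.1 hmin
    · rintro ⟨n, h1, _⟩; exact le_trans (ha0le n) h1
  have hdisj0 : ∀ i j, i < j →
      Disjoint (Set.Ico (a i) (a (i+1))) (Set.Ico (a j) (a (j+1))) := by
    intro i j hij
    refine Set.disjoint_left.2 fun r h1 h2 => ?_
    have hmo := hamono (Nat.succ_le_of_lt hij)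
    have := h1.2
    have := h2.1
    linarith
  have hdisj : Pairwise (Function.onFun Disjoint fun n => Set.Ico (a n) (a (n+1))) := by
    intro i j hij
    rcases hij.lt_or_gt with h | h
    · exact hdisj0 i j h
    · exact (hdisj0 j i h).symm
  -- per-interval identity
  have hterm : ∀ n, κ n s V = volume ({r : ℝ | g (s, r) ∈ W} ∩ Set.Ico (a n) (a (n+1))) := by
    intro n
    have hEIco : {r : ℝ | g (s, r) ∈ W} ∩ Set.Ico (a n) (a (n+1))
        = (φ n) ⁻¹' ({p : ℝ | f n (s, p) ∈ W} ∩ Set.Ico 0 1) := by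
      ext r
      simp only [Set.mem_inter_iff, Set.mem_preimage, Set.mem_setOf_eq, Set.mem_Ico]
      constructor
      · rintro ⟨hrE, hr1, hr2⟩
        have hr0 : (0:ℝ) ≤ r := le_trans (ha0le n) hr1
        have hNr : N r = n := hNspec r n hr1 hr2
        have hgr : g (s, r) = f n (s, φ n r) := by
          rw [hgdef]
          simp only [if_pos hr0]
          rw [hNr]
        refine ⟨by rw [← hgr]; exact hrE, ?_, ?_⟩
        · exact div_nonneg (by linarith) (hc0 n).le
        · rw [hφdef]
          simp only
          rw [div_lt_one (hc0 n)]
          rw [hasucc n] at hr2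
          linarith
      · rintro ⟨hrf, hp0, hp1⟩
        have hr1 : a n ≤ r := by
          have h' := mul_nonneg hp0 (hc0 n).le
          rw [hφdef] at h'
          simp only at h'
          rw [div_mul_cancel₀ _ (hc0 n).ne'] at h'
          linarith
        have hr2 : r < a (n+1) := by
          rw [hφdef] at hp1
          simp only at hp1
          rw [div_lt_one (hc0 n)] at hp1
          rw [hasucc n]
          linarith
        have hr0 : (0:ℝ) ≤ r := le_trans (ha0le n) hr1
        have hNr : N r = n := hNspec r n hr1 hr2
        refine ⟨?_, hr1, hr2⟩
        rw [hgdef]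
        simp only [if_pos hr0]
        rw [hNr]
        exact hrf
    have hAmeas : MeasurableSet ({p : ℝ | f n (s, p) ∈ W} ∩ Set.Ico 0 1) :=
      (((hf n).comp measurable_prodMk_left) hW).inter measurableSet_Ico
    have hφeq : φ n = (fun y => (c n)⁻¹ * y) ∘ (fun r => r - a n) := by
      funext r
      simp [hφdef, div_eq_inv_mul]
    have hB : MeasurableSet ((fun y => (c n)⁻¹ * y) ⁻¹' ({p : ℝ | f n (s, p) ∈ W} ∩ Set.Ico 0 1)) :=
      (measurable_const_mul _) hAmeas
    rw [hEIco, hφeq, Set.preimage_comp,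
      (measurePreserving_sub_right volume (a n)).measure_preimage hB.nullMeasurableSet,
      Real.volume_preimage_mul_left (inv_ne_zero (hc0 n).ne' : ((c n)⁻¹ : ℝ) ≠ 0)]
    have hIcoIoo : volume ({p : ℝ | f n (s, p) ∈ W} ∩ Set.Ico 0 1)
        = volume ({p : ℝ | f n (s, p) ∈ W} ∩ Set.Ioo 0 1) := by
      refine le_antisymm ?_ (measure_mono (Set.inter_subset_inter_right _ Set.Ioo_subset_Ico_self))
      calc volume ({p : ℝ | f n (s, p) ∈ W} ∩ Set.Ico 0 1)
          ≤ volume (({p : ℝ | f n (s, p) ∈ W} ∩ Set.Ioo 0 1) ∪ {0}) := by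
            refine measure_mono fun y hy => ?_
            rcases eq_or_ne y 0 with rfl | hy0
            · exact Or.inr rfl
            · exact Or.inl ⟨hy.1, lt_of_le_of_ne hy.2.1 (Ne.symm hy0), hy.2.2⟩
        _ ≤ volume ({p : ℝ | f n (s, p) ∈ W} ∩ Set.Ioo 0 1) + volume ({0} : Set ℝ) :=
            measure_union_le _ _
        _ = volume ({p : ℝ | f n (s, p) ∈ W} ∩ Set.Ioo 0 1) := by
            rw [Real.volume_singleton, add_zero]
    have hτV : volume ({p : ℝ | f n (s, p) ∈ W} ∩ Set.Ioo 0 1)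
        = (ENNReal.ofReal (c n))⁻¹ * κ n s V := by
      have h1 := hfs n s V hV
      rw [Measure.restrict_apply' measurableSet_Ioo] at h1
      rw [← h1, hτapp n s, Measure.smul_apply, smul_eq_mul]
    rw [hIcoIoo, hτV, inv_inv, abs_of_pos (hc0 n), ← mul_assoc,
      ENNReal.mul_inv_cancel (hcne0 n) ENNReal.ofReal_ne_top, one_mul]
  -- assemble
  calc σ s V = (Measure.sum fun n => κ n s) V := by rw [Kernel.measure_sum_seq σ s]
    _ = ∑' n, κ n s V := Measure.sum_apply _ hV
    _ = ∑' n, volume ({r : ℝ | g (s, r) ∈ W} ∩ Set.Ico (a n) (a (n+1))) :=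
        tsum_congr fun n => hterm n
    _ = (volume.restrict (Set.Ici (0:ℝ))) {r : ℝ | g (s, r) ∈ W} := by
        rw [hIci, Measure.restrict_iUnion hdisj fun n => measurableSet_Ico,
          Measure.sum_apply _ hE]
        exact tsum_congr fun n => (Measure.restrict_apply hE).symm

lemma aux_converse (σ : Kernel S T) (g : S × ℝ → T ⊕ Unit) (hg : Measurable g)
    (h : ∀ s, ∀ V, MeasurableSet V →
      σ s V = (volume.restrict (Set.Ici (0:ℝ))) {r : ℝ | g (s, r) ∈ Sum.inl '' V}) :
    IsSFiniteKernel σ := by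
  have hinl : MeasurableEmbedding (Sum.inl : T → T ⊕ Unit) :=
    ⟨Sum.inl_injective, measurable_inl, fun s hs => hs.inl_image⟩
  set ν : ℕ → Measure ℝ := fun n => volume.restrict (Set.Ico (n:ℝ) (n+1)) with hνdef
  haveI : ∀ n, IsProbabilityMeasure (ν n) := by
    intro n
    constructor
    rw [hνdef]
    rw [Measure.restrict_apply_univ, Real.volume_Ico]
    simp
  set κs : ℕ → Kernel S T := fun n =>
    Kernel.comapRight
      (Kernel.map ((Kernel.deterministic (id : S → S) measurable_id) ×ₖ Kernel.const S (ν n)) g)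
      hinl with hκsdef
  have hκs : ∀ n s W, MeasurableSet W → κs n s W = ν n {r : ℝ | g (s, r) ∈ Sum.inl '' W} := by
    intro n s W hW
    rw [hκsdef]
    rw [Kernel.comapRight_apply' _ _ _ hW, Kernel.map_apply' _ hg _ hW.inl_image,
      Kernel.prod_apply, Kernel.deterministic_apply, Kernel.const_apply, Measure.dirac_prod,
      Measure.map_apply measurable_prodMk_left (hg hW.inl_image)]
    rfl
  have hfin : ∀ n, IsFiniteKernel (κs n) := by
    intro n
    refine ⟨⟨1, ENNReal.one_lt_top, fun s => ?_⟩⟩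
    rw [hκs n s Set.univ MeasurableSet.univ]
    calc ν n {r : ℝ | g (s, r) ∈ Sum.inl '' Set.univ} ≤ ν n Set.univ :=
        measure_mono (Set.subset_univ _)
      _ = 1 := measure_univ
  have hIci : Set.Ici (0:ℝ) = ⋃ n : ℕ, Set.Ico (n:ℝ) (n+1) := by
    ext r
    simp only [Set.mem_Ici, Set.mem_iUnion, Set.mem_Ico]
    constructor
    · intro hr
      exact ⟨⌊r⌋₊, Nat.floor_le hr, Nat.lt_floor_add_one r⟩
    · rintro ⟨n, h1, _⟩
      exact le_trans (Nat.cast_nonneg n) h1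
  have hdisj0 : ∀ i j : ℕ, i < j →
      Disjoint (Set.Ico (i:ℝ) (i+1)) (Set.Ico (j:ℝ) (j+1)) := by
    intro i j hij
    refine Set.disjoint_left.2 fun r h1 h2 => ?_
    have : (i:ℝ) + 1 ≤ (j:ℝ) := by exact_mod_cast Nat.succ_le_of_lt hij
    have := h1.2
    have := h2.1
    linarith
  have hdisj : Pairwise (Function.onFun Disjoint fun n : ℕ => Set.Ico (n:ℝ) (n+1)) := by
    intro i j hij
    rcases hij.lt_or_gt with hlt | hlt
    · exact hdisj0 i j hlt
    · exact (hdisj0 j i hlt).symm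
  have hsum : σ = Kernel.sum κs := by
    refine Kernel.ext fun s => Measure.ext fun W hW => ?_
    rw [Kernel.sum_apply' _ _ hW, h s W hW]
    have hE : MeasurableSet {r : ℝ | g (s, r) ∈ Sum.inl '' W} :=
      (hg.comp measurable_prodMk_left) hW.inl_image
    rw [hIci, Measure.restrict_iUnion hdisj fun n => measurableSet_Ico,
      Measure.sum_apply _ hE]
    exact tsum_congr fun n => (hκs n s W hW).symm
  exact ⟨⟨κs, hfin, hsum⟩⟩

end Main

open MeasureTheory ProbabilityTheory

/-- Randomisation of s-finite kernels: an s-finite kernel `σ` from a measurable space `S` to a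
standard Borel space `T` arises by pushing forward Lebesgue measure on `[0,∞)` along a
measurable partial function `g : S × [0,∞) ⇀ T` (formalised as a measurable function into
`T ⊕ Unit`, points sent to `Sum.inr` being discarded); conversely every kernel arising this
way is s-finite. -/
theorem randomisation_sfinite_kernel {S T : Type*} [MeasurableSpace S] [MeasurableSpace T]
    [StandardBorelSpace T] :
    (∀ σ : Kernel S T, IsSFiniteKernel σ →
      ∃ g : S × ℝ → T ⊕ Unit, Measurable g ∧
        ∀ s, ∀ V, MeasurableSet V →
          σ s V = (volume.restrict (Set.Ici (0:ℝ))) {r : ℝ | g (s, r) ∈ Sum.inl '' V}) ∧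
    (∀ (σ : Kernel S T) (g : S × ℝ → T ⊕ Unit), Measurable g →
      (∀ s, ∀ V, MeasurableSet V →
        σ s V = (volume.restrict (Set.Ici (0:ℝ))) {r : ℝ | g (s, r) ∈ Sum.inl '' V}) →
      IsSFiniteKernel σ) :=
  ⟨fun σ hσ => aux_forward σ, fun σ g hg h => aux_converse σ g hg h⟩
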